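/- arXiv:2112.13604 — 5 statements merged into one kernel-verified Lean document; each statement's English description precedes it below -/
import Mathlib

section
/- Let k₀ be a field of characteristic p > 0, k = k₀(t) the field of rational functions in one variable t over k₀, a, b ∈ k₀ nonzero, and m, n ≥ 1 integers with p^m > 2. If x, y ∈ k satisfy x = a·t·x^{p^m} + b·y^{p^n}, then x = 0 and y = 0. -/
open Polynomial

/-- **Rosenlicht/Tits-type example.**
Let `k₀` be a field of characteristic `p > 0`, `k = k₀(t)` the field of rational
functions, `a b ∈ k₀` nonzero, and `m n ≥ 1` integers with `p ^ m > 2`.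
If `x y ∈ k` satisfy `x = a * t * x ^ p ^ m + b * y ^ p ^ n`, then `x = 0` and `y = 0`. -/
theorem unipotent_curve_trivial_rational_points
    (p : ℕ) (k₀ : Type) [Field k₀] [CharP k₀ p] (hp : 0 < p)
    (a b : k₀) (ha : a ≠ 0) (hb : b ≠ 0)
    (m n : ℕ) (hm : 1 ≤ m) (hn : 1 ≤ n) (hpm : 2 < p ^ m)
    (x y : RatFunc k₀)
    (heq : x = RatFunc.C a * RatFunc.X * x ^ p ^ m + RatFunc.C b * y ^ p ^ n) :
    x = 0 ∧ y = 0 := by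
  have hCb : (RatFunc.C b : RatFunc k₀) ≠ 0 :=
    RatFunc.algebraMap_C b ▸ RatFunc.algebraMap_ne_zero (Polynomial.C_ne_zero.mpr hb)
  -- first show x = 0
  have hx0 : x = 0 := by
    obtain ⟨Q, hQ⟩ : ∃ Q, p ^ m = Q + 3 := ⟨p ^ m - 3, by omega⟩
    set f := x.num with hf
    set g := x.denom with hg
    set u := y.num with hu
    set w := y.denom with hw
    have hgne : algebraMap k₀[X] (RatFunc k₀) g ≠ 0 :=
      RatFunc.algebraMap_ne_zero (RatFunc.denom_ne_zero x)
    have hwne : algebraMap k₀[X] (RatFunc k₀) w ≠ 0 :=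
      RatFunc.algebraMap_ne_zero (RatFunc.denom_ne_zero y)
    have hxf : algebraMap k₀[X] (RatFunc k₀) f = x * algebraMap k₀[X] (RatFunc k₀) g :=
      (div_eq_iff hgne).mp (RatFunc.num_div_denom x)
    have hyu : algebraMap k₀[X] (RatFunc k₀) u = y * algebraMap k₀[X] (RatFunc k₀) w :=
      (div_eq_iff hwne).mp (RatFunc.num_div_denom y)
    -- the polynomial identity obtained by clearing denominators
    have key : algebraMap k₀[X] (RatFunc k₀) (f * g ^ (Q + 2) * w ^ p ^ n) =
        algebraMap k₀[X] (RatFunc k₀) (Polynomial.C a * Polynomial.X * f ^ (Q + 3) * w ^ p ^ n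
            + Polynomial.C b * u ^ p ^ n * g ^ (Q + 3)) := by
      simp only [map_add, map_mul, map_pow, RatFunc.algebraMap_C, RatFunc.algebraMap_X]
      rw [hxf, hyu]
      rw [hQ] at heq
      linear_combination ((algebraMap k₀[X] (RatFunc k₀) g) ^ (Q + 3) *
        (algebraMap k₀[X] (RatFunc k₀) w) ^ p ^ n) * heq
    have P : f * g ^ (Q + 2) * w ^ p ^ n =
        Polynomial.C a * Polynomial.X * f ^ (Q + 3) * w ^ p ^ n
          + Polynomial.C b * u ^ p ^ n * g ^ (Q + 3) :=
      RatFunc.algebraMap_injective k₀ key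
    -- characteristic facts
    have hq0 : ((p ^ m : ℕ) : k₀) = 0 :=
      (CharP.cast_eq_zero_iff k₀ p _).2 (dvd_pow_self p (by omega))
    have hr0 : ((p ^ n : ℕ) : k₀) = 0 :=
      (CharP.cast_eq_zero_iff k₀ p _).2 (dvd_pow_self p (by omega))
    have hQ3 : ((Q + 3 : ℕ) : k₀) = 0 := by rw [← hQ]; exact hq0
    have hC3 : (Polynomial.C ((Q + 3 : ℕ) : k₀) : k₀[X]) = 0 := by rw [hQ3, map_zero]
    have hCr : (Polynomial.C ((p ^ n : ℕ) : k₀) : k₀[X]) = 0 := by rw [hr0, map_zero]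
    have hC2 : (Polynomial.C ((Q + 2 : ℕ) : k₀) : k₀[X]) = -1 := by
      have h2 : ((Q + 2 : ℕ) : k₀) = -1 := by push_cast at hQ3 ⊢; linear_combination hQ3
      rw [h2, map_neg, map_one]
    -- differentiate the identity
    have hD := congrArg derivative P
    simp only [derivative_add, derivative_mul, derivative_pow, derivative_C, derivative_X,
      hC3, hCr, hC2, show Q + 2 - 1 = Q + 1 by omega, zero_mul, mul_zero, add_zero, zero_add,
      mul_one, one_mul, neg_mul, neg_one_mul] at hD
    -- cancel w ^ p ^ n
    have hwpne : (w : k₀[X]) ^ p ^ n ≠ 0 := pow_ne_zero _ (RatFunc.denom_ne_zero y)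
    have E : derivative f * g ^ (Q + 2) - f * (g ^ (Q + 1) * derivative g)
        = Polynomial.C a * f ^ (Q + 3) := by
      apply mul_right_cancel₀ hwpne
      linear_combination hD
    -- g divides C a, hence g = 1
    have hdvd : g ∣ Polynomial.C a * f ^ (Q + 3) := by
      rw [← E]
      exact dvd_sub ⟨derivative f * g ^ (Q + 1), by ring⟩
        ⟨f * (g ^ Q * derivative g), by ring⟩
    have hcop : IsCoprime g (f ^ (Q + 3)) := (RatFunc.isCoprime_num_denom x).symm.pow_right
    have hdvdCa : g ∣ Polynomial.C a := hcop.dvd_of_dvd_mul_right hdvd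
    have hg1 : g = 1 :=
      (RatFunc.monic_denom x).eq_one_of_isUnit
        (isUnit_of_dvd_unit hdvdCa (Polynomial.isUnit_C.2 ha.isUnit))
    rw [hg1] at E
    simp only [one_pow, derivative_one, mul_zero, mul_one, sub_zero] at E
    -- now E : derivative f = C a * f ^ (Q + 3); conclude f = 0 by degree count
    by_contra hxne
    have hfne : f ≠ 0 := fun h => hxne (RatFunc.num_eq_zero_iff.mp h)
    have hrne : Polynomial.C a * f ^ (Q + 3) ≠ 0 :=
      mul_ne_zero (Polynomial.C_ne_zero.mpr ha) (pow_ne_zero _ hfne)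
    have hdne : derivative f ≠ 0 := by rw [E]; exact hrne
    have hnd : f.natDegree ≠ 0 := by
      intro h
      exact hdne (by rw [Polynomial.eq_C_of_natDegree_eq_zero h]; simp)
    have hlt := Polynomial.natDegree_derivative_lt hnd
    rw [E, Polynomial.natDegree_C_mul ha, Polynomial.natDegree_pow] at hlt
    have hle : f.natDegree ≤ (Q + 3) * f.natDegree := Nat.le_mul_of_pos_left _ (by omega)
    omega
  refine ⟨hx0, ?_⟩
  rw [hx0] at heq
  rw [zero_pow (pow_pos hp m).ne', mul_zero, zero_add] at heq
  have hy : y ^ p ^ n = 0 := by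
    rcases mul_eq_zero.mp heq.symm with h | h
    · exact absurd h hCb
    · exact h
  exact pow_eq_zero_iff (pow_pos hp n).ne' |>.mp hy
end

section
/- Let k₀ be a field of characteristic p > 0, k = k₀(t), a ∈ k₀ nonzero, and m ≥ 1 an integer with p^m > 2. If x ∈ k satisfies dx/dt = a·x^{p^m} (derivative with respect to t), then x = 0. -/
open Polynomial

lemma derivation_algebraMap_poly {k₀ : Type} [Field k₀]
    (D : Derivation k₀ (RatFunc k₀) (RatFunc k₀)) (hD : D RatFunc.X = 1)
    (f : k₀[X]) :
    D (algebraMap k₀[X] (RatFunc k₀) f)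
      = algebraMap k₀[X] (RatFunc k₀) (derivative f) := by
  have key : ∀ g : k₀[X], algebraMap k₀[X] (RatFunc k₀) g
      = Polynomial.aeval RatFunc.X g := by
    intro g
    rw [← RatFunc.algebraMap_X, Polynomial.aeval_algebraMap_apply,
      Polynomial.aeval_X_left_apply]
  rw [key f, key (derivative f), Derivation.comp_aeval_eq, hD, smul_eq_mul, mul_one]

/-- Let `k₀` be a field of characteristic `p > 0`, `k = k₀(t)`, `a ∈ k₀` nonzero and
`m ≥ 1` with `p ^ m > 2`.  If `x ∈ k` satisfies `dx/dt = a * x ^ p ^ m`, where `d/dt`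
is the unique derivation of `k₀(t)` over `k₀` with `dt/dt = 1`, then `x = 0`. -/
theorem derivative_eq_const_mul_pow_char_imp_zero
    (p : ℕ) (k₀ : Type) [Field k₀] [CharP k₀ p] (hp : 0 < p)
    (a : k₀) (ha : a ≠ 0) (m : ℕ) (hm : 1 ≤ m) (hpm : 2 < p ^ m)
    (D : Derivation k₀ (RatFunc k₀) (RatFunc k₀)) (hD : D RatFunc.X = 1)
    (x : RatFunc k₀) (heq : D x = RatFunc.C a * x ^ p ^ m) :
    x = 0 := by
  by_contra hx
  set q := p ^ m with hq
  obtain ⟨n, hn⟩ : ∃ n, q = n + 3 := ⟨q - 3, by omega⟩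
  set f := x.num with hf
  set g := x.denom with hg
  have hgne : g ≠ 0 := RatFunc.denom_ne_zero x
  have hG : algebraMap k₀[X] (RatFunc k₀) g ≠ 0 := RatFunc.algebraMap_ne_zero hgne
  have hx' : x = algebraMap k₀[X] (RatFunc k₀) f / algebraMap k₀[X] (RatFunc k₀) g :=
    (RatFunc.num_div_denom x).symm
  have hFx : algebraMap k₀[X] (RatFunc k₀) f = x * algebraMap k₀[X] (RatFunc k₀) g := by
    rw [hx', div_mul_cancel₀ _ hG]
  have e1 : algebraMap k₀[X] (RatFunc k₀) (derivative f)
      = x * algebraMap k₀[X] (RatFunc k₀) (derivative g)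
        + algebraMap k₀[X] (RatFunc k₀) g * D x := by
    rw [← derivation_algebraMap_poly D hD, ← derivation_algebraMap_poly D hD, hFx,
      Derivation.leibniz, smul_eq_mul, smul_eq_mul]
  -- the polynomial identity
  have key : derivative f * g ^ q
      = f * derivative g * g ^ (n + 2) + Polynomial.C a * f ^ q * g := by
    apply RatFunc.algebraMap_injective k₀
    simp only [map_mul, map_add, map_pow, RatFunc.algebraMap_C]
    rw [e1, heq, hx']
    rw [hn]
    field_simp
    rw [div_pow]
    field_simp
    ring
  -- deduce g = 1
  have h2 : g ^ 2 ∣ Polynomial.C a * f ^ q * g := by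
    have hd1 : g ^ 2 ∣ derivative f * g ^ q :=
      Dvd.dvd.mul_left (pow_dvd_pow g (by omega)) _
    have hd2 : g ^ 2 ∣ f * derivative g * g ^ (n + 2) :=
      Dvd.dvd.mul_left (pow_dvd_pow g (by omega)) _
    have : Polynomial.C a * f ^ q * g
        = derivative f * g ^ q - f * derivative g * g ^ (n + 2) := by
      rw [key]; ring
    rw [this]
    exact dvd_sub hd1 hd2
  have hgdvd : g ∣ Polynomial.C a * f ^ q := by
    have := h2
    rw [pow_two] at this
    exact (mul_dvd_mul_iff_right hgne).mp this
  have hcop : IsCoprime g (f ^ q) := ((RatFunc.isCoprime_num_denom x).symm).pow_right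
  have hgC : g ∣ Polynomial.C a := hcop.dvd_of_dvd_mul_right hgdvd
  have hg1 : g = 1 := by
    have hdeg : g.natDegree = 0 := by
      have := Polynomial.natDegree_le_of_dvd hgC (Polynomial.C_ne_zero.mpr ha)
      simpa using this
    exact (RatFunc.monic_denom x).natDegree_eq_zero.mp hdeg
  -- now x is a polynomial
  have hxF : x = algebraMap k₀[X] (RatFunc k₀) f := by
    rw [hx', hg1, map_one, div_one]
  have hder : derivative f = Polynomial.C a * f ^ q := by
    apply RatFunc.algebraMap_injective k₀
    simp only [map_mul, map_pow, RatFunc.algebraMap_C]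
    rw [← derivation_algebraMap_poly D hD, ← hxF, heq]
  have hfne : f ≠ 0 := RatFunc.num_ne_zero hx
  have hrhs : Polynomial.C a * f ^ q ≠ 0 :=
    mul_ne_zero (Polynomial.C_ne_zero.mpr ha) (pow_ne_zero _ hfne)
  have hd0 : f.natDegree ≠ 0 := by
    intro h
    have hz : derivative f = 0 := by
      rw [Polynomial.eq_C_of_natDegree_eq_zero h, Polynomial.derivative_C]
    exact hrhs (hder.symm.trans hz)
  have hlt : (derivative f).natDegree < f.natDegree :=
    Polynomial.natDegree_derivative_lt hd0
  rw [hder, Polynomial.natDegree_C_mul ha,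
    Polynomial.natDegree_pow] at hlt
  have : f.natDegree ≤ q * f.natDegree := Nat.le_mul_of_pos_left _ (by omega)
  omega
end

section
/- Let k₀ be a field of characteristic p > 0, k = k₀(t), a, b ∈ k₀ nonzero, and m, n ≥ 1 integers with p^m > 2. If x, y ∈ k satisfy x = a·x^{p^m} + b·t·y^{p^n}, then y = 0 and x ∈ k₀ with x = a·x^{p^m}. In particular, the set of solutions (x, y) ∈ k² of this equation is finite. -/
open Polynomial

lemma aux_main (p : ℕ) (k₀ : Type) [Field k₀] [CharP k₀ p] (hp : 0 < p)
    (a b : k₀) (ha : a ≠ 0) (hb : b ≠ 0)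
    (s e : ℕ) (hq0 : ((s + 3 : ℕ) : k₀) = 0) (hr0 : ((e + 1 : ℕ) : k₀) = 0)
    (x y : RatFunc k₀)
    (hxy : x = RatFunc.C a * x ^ (s + 3) + RatFunc.C b * RatFunc.X * y ^ (e + 1)) :
    y = 0 ∧ (∃ c : k₀, x = RatFunc.C c) ∧ x = RatFunc.C a * x ^ (s + 3) := by
  set f := x.num with hf_def
  set g := x.denom with hg_def
  set u := y.num with hu_def
  set v := y.denom with hv_def
  have hg0 : g ≠ 0 := RatFunc.denom_ne_zero x
  have hv0 : v ≠ 0 := RatFunc.denom_ne_zero y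
  have hgA : algebraMap k₀[X] (RatFunc k₀) g ≠ 0 := RatFunc.algebraMap_ne_zero hg0
  have hvA : algebraMap k₀[X] (RatFunc k₀) v ≠ 0 := RatFunc.algebraMap_ne_zero hv0
  have hx : algebraMap k₀[X] (RatFunc k₀) f = x * algebraMap k₀[X] (RatFunc k₀) g := by
    exact (div_eq_iff hgA).mp (RatFunc.num_div_denom x)
  have hy : algebraMap k₀[X] (RatFunc k₀) u = y * algebraMap k₀[X] (RatFunc k₀) v := by
    exact (div_eq_iff hvA).mp (RatFunc.num_div_denom y)
  -- the cleared-denominator polynomial identity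
  have hE : f * g ^ (s + 2) * v ^ (e + 1)
      = Polynomial.C a * f ^ (s + 3) * v ^ (e + 1)
        + Polynomial.C b * Polynomial.X * u ^ (e + 1) * g ^ (s + 3) := by
    apply RatFunc.algebraMap_injective k₀
    simp only [map_mul, map_add, map_pow, RatFunc.algebraMap_C, RatFunc.algebraMap_X]
    rw [hx, hy]
    ring_nf
    linear_combination (algebraMap k₀[X] (RatFunc k₀) g ^ (s + 3)
      * algebraMap k₀[X] (RatFunc k₀) v ^ (e + 1)) * hxy
  -- derivative helper facts
  have hcast2 : ((s + 2 : ℕ) : k₀) = -1 := by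
    have h3 : ((s + 3 : ℕ) : k₀) = ((s + 2 : ℕ) : k₀) + 1 := by push_cast; ring
    rw [h3] at hq0; linear_combination hq0
  have dpow1 : ∀ w : k₀[X], derivative (w ^ (e + 1)) = 0 := by
    intro w
    rw [derivative_pow, hr0, Polynomial.C_0, zero_mul, zero_mul]
  have dpow3 : ∀ w : k₀[X], derivative (w ^ (s + 3)) = 0 := by
    intro w
    rw [derivative_pow, hq0, Polynomial.C_0, zero_mul, zero_mul]
  have dpow2 : ∀ w : k₀[X], derivative (w ^ (s + 2)) = -(w ^ (s + 1) * derivative w) := by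
    intro w
    rw [derivative_pow, hcast2]
    have h21 : s + 2 - 1 = s + 1 := by omega
    rw [h21]
    simp only [map_neg, Polynomial.C_1]
    ring
  -- differentiate hE
  have hD : derivative f * g ^ (s + 2) * v ^ (e + 1)
      - f * g ^ (s + 1) * derivative g * v ^ (e + 1)
      = Polynomial.C b * u ^ (e + 1) * g ^ (s + 3) := by
    have h := congrArg derivative hE
    simp only [derivative_mul, derivative_add, dpow1, dpow2, dpow3, derivative_C,
      Polynomial.derivative_X, mul_zero, zero_mul, add_zero, zero_add, mul_one] at h
    linear_combination h
  -- the key one-variable identity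
  have hstar : Polynomial.C a * f ^ (s + 3)
      = g ^ (s + 1) * (f * g - Polynomial.X * derivative f * g + Polynomial.X * f * derivative g) := by
    have hcan : (Polynomial.C a * f ^ (s + 3)) * v ^ (e + 1)
        = (g ^ (s + 1) * (f * g - Polynomial.X * derivative f * g
            + Polynomial.X * f * derivative g)) * v ^ (e + 1) := by
      linear_combination Polynomial.X * hD - hE
    exact mul_right_cancel₀ (pow_ne_zero _ hv0) hcan
  -- g divides a unit, hence g = 1
  have hgdvd : g ∣ Polynomial.C a * f ^ (s + 3) := by
    refine ⟨g ^ s * (f * g - Polynomial.X * derivative f * g + Polynomial.X * f * derivative g), ?_⟩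
    rw [hstar]; ring
  have hcop : IsCoprime (f ^ (s + 3)) g := (RatFunc.isCoprime_num_denom x).pow_left
  have hgu : IsUnit g := by
    have : g ∣ Polynomial.C a := hcop.symm.dvd_of_dvd_mul_right hgdvd
    exact isUnit_of_dvd_unit this (Polynomial.isUnit_C.mpr ha.isUnit)
  have hg1 : g = 1 := (RatFunc.monic_denom x).eq_one_of_isUnit hgu
  -- f is constant
  have hfX : Polynomial.C a * f ^ (s + 3) = f - Polynomial.X * derivative f := by
    rw [hstar, hg1]
    simp only [one_pow, mul_one, derivative_one, mul_zero, add_zero, one_mul]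
  have hfdeg : f.natDegree = 0 := by
    by_contra hd
    have hd1 : 1 ≤ f.natDegree := Nat.one_le_iff_ne_zero.mpr hd
    have hfne : f ≠ 0 := fun h => hd (by simp [h])
    have hdeg1 : (Polynomial.C a * f ^ (s + 3)).natDegree = (s + 3) * f.natDegree := by
      rw [Polynomial.natDegree_C_mul ha, Polynomial.natDegree_pow]
    have hdeg2 : (f - Polynomial.X * derivative f).natDegree ≤ f.natDegree := by
      refine le_trans (Polynomial.natDegree_sub_le _ _) (max_le le_rfl ?_)
      refine le_trans (Polynomial.natDegree_mul_le) ?_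
      have := Polynomial.natDegree_derivative_le f
      have hX : (Polynomial.X : k₀[X]).natDegree = 1 := Polynomial.natDegree_X
      omega
    rw [hfX] at hdeg1
    nlinarith [hdeg1, hdeg2, hd1]
  obtain ⟨c, hc⟩ := Polynomial.natDegree_eq_zero.mp hfdeg
  have hdf : derivative f = 0 := by rw [← hc]; exact Polynomial.derivative_C
  -- conclude u = 0
  have hu0 : u = 0 := by
    have h0 : Polynomial.C b * u ^ (e + 1) * g ^ (s + 3) = 0 := by
      rw [← hD, hdf, hg1]; simp
    rcases mul_eq_zero.mp h0 with h | h
    · rcases mul_eq_zero.mp h with h | h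
      · exact absurd (Polynomial.C_eq_zero.mp h) hb
      · exact pow_eq_zero_iff (by omega) |>.mp h
    · exact absurd h (pow_ne_zero _ hg0)
  have hy0 : y = 0 := RatFunc.num_eq_zero_iff.mp hu0
  have hxc : x = RatFunc.C c := by
    rw [← RatFunc.num_div_denom x, ← hg_def, ← hf_def, hg1, ← hc]
    simp [RatFunc.algebraMap_C]
  refine ⟨hy0, ⟨c, hxc⟩, ?_⟩
  have hyp : y ^ (e + 1) = 0 := by rw [hy0]; exact zero_pow (by omega)
  rw [hyp, mul_zero, add_zero] at hxy
  exact hxy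



/-- **Gabber-type example.**
Let `k₀` be a field of characteristic `p > 0`, `k = k₀(t)`, `a b ∈ k₀` nonzero, and
`m n ≥ 1` with `p ^ m > 2`.  If `x y ∈ k` satisfy `x = a * x ^ p ^ m + b * t * y ^ p ^ n`,
then `y = 0` and `x` is a constant in `k₀` satisfying `x = a * x ^ p ^ m`.
In particular the set of solutions `(x, y) ∈ k²` of this equation is finite. -/
theorem unipotent_curve_finite_rational_points
    (p : ℕ) (k₀ : Type) [Field k₀] [CharP k₀ p] (hp : 0 < p)
    (a b : k₀) (ha : a ≠ 0) (hb : b ≠ 0)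
    (m n : ℕ) (hm : 1 ≤ m) (hn : 1 ≤ n) (hpm : 2 < p ^ m) :
    (∀ x y : RatFunc k₀,
      x = RatFunc.C a * x ^ p ^ m + RatFunc.C b * RatFunc.X * y ^ p ^ n →
      y = 0 ∧ (∃ c : k₀, x = RatFunc.C c) ∧ x = RatFunc.C a * x ^ p ^ m) ∧
    {s : RatFunc k₀ × RatFunc k₀ |
      s.1 = RatFunc.C a * s.1 ^ p ^ m + RatFunc.C b * RatFunc.X * s.2 ^ p ^ n}.Finite := by
  have hchar : (p : k₀) = 0 := CharP.cast_eq_zero k₀ p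
  obtain ⟨s, hs⟩ : ∃ s, p ^ m = s + 3 := ⟨p ^ m - 3, by omega⟩
  obtain ⟨e, he⟩ : ∃ e, p ^ n = e + 1 :=
    ⟨p ^ n - 1, by have := Nat.one_le_pow n p hp; omega⟩
  have hq0 : ((s + 3 : ℕ) : k₀) = 0 := by
    rw [← hs]; push_cast [hchar]; exact zero_pow (by omega)
  have hr0 : ((e + 1 : ℕ) : k₀) = 0 := by
    rw [← he]; push_cast [hchar]; exact zero_pow (by omega)
  have main : ∀ x y : RatFunc k₀,
      x = RatFunc.C a * x ^ p ^ m + RatFunc.C b * RatFunc.X * y ^ p ^ n →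
      y = 0 ∧ (∃ c : k₀, x = RatFunc.C c) ∧ x = RatFunc.C a * x ^ p ^ m := by
    intro x y hxy
    rw [hs, he] at hxy
    obtain ⟨h1, h2, h3⟩ := aux_main p k₀ hp a b ha hb s e hq0 hr0 x y hxy
    exact ⟨h1, h2, by rw [hs]; exact h3⟩
  refine ⟨main, ?_⟩
  -- the solution set injects into the root set of a nonzero polynomial
  set P : Polynomial (RatFunc k₀) :=
    Polynomial.C (RatFunc.C a) * Polynomial.X ^ p ^ m - Polynomial.X with hP
  have hPne : P ≠ 0 := by
    intro h0
    have hco : P.coeff (p ^ m) = RatFunc.C a := by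
      rw [hP, Polynomial.coeff_sub, Polynomial.coeff_C_mul, Polynomial.coeff_X_pow,
        if_pos rfl, mul_one, Polynomial.coeff_X, if_neg (by rw [hs]; omega), sub_zero]
    rw [h0] at hco
    simp only [Polynomial.coeff_zero] at hco
    have hCa : RatFunc.C a ≠ 0 := by
      rw [← RatFunc.algebraMap_C]
      exact RatFunc.algebraMap_ne_zero (mt Polynomial.C_eq_zero.mp ha)
    exact hCa hco.symm
  have hroots : {z : RatFunc k₀ | z = RatFunc.C a * z ^ p ^ m}.Finite := by
    refine (Polynomial.finite_setOf_isRoot hPne).subset ?_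
    intro z hz
    simp only [Set.mem_setOf_eq] at hz ⊢
    show P.IsRoot z
    rw [hP]
    simp only [Polynomial.IsRoot, Polynomial.eval_sub, Polynomial.eval_mul, Polynomial.eval_C,
      Polynomial.eval_pow, Polynomial.eval_X]
    rw [← hz]; ring
  refine ((hroots.image fun z => (z, (0 : RatFunc k₀))).subset ?_)
  rintro ⟨x, y⟩ hxy
  simp only [Set.mem_setOf_eq] at hxy
  obtain ⟨h1, _, h3⟩ := main x y hxy
  exact ⟨x, h3, by rw [h1]⟩
end

section
/- Let p > 2 be a prime, k₀ a field of characteristic p, k = k₀(t), and 1 ≤ m ≤ n integers. Let G₂ = {(x, y) : x = −t·x^{p^{2m}} + y^{p^n}} and define h((x,y),(x',y')) := (x^{p^m}x' − x(x')^{p^m}, x(y')^{p^{n−m}} − y^{p^{n−m}}x'). Then h is not symmetric: there exist a field extension K/k and elements g, g' ∈ G₂(K) such that h(g, g') ≠ h(g', g). -/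
/-- A bundled field extension of `k`. -/
structure FieldExtension (k : Type) [Field k] where
  /-- the underlying type of the extension field -/
  carrier : Type
  [fieldCarrier : Field carrier]
  [algebraCarrier : Algebra k carrier]

attribute [instance] FieldExtension.fieldCarrier FieldExtension.algebraCarrier

/-- Endo's map
`h((x,y),(x',y')) = (x^(p^m)*x' - x*x'^(p^m), x*y'^(p^(n-m)) - y^(p^(n-m))*x')`. -/
def endoPairing {A : Type} [CommRing A] (p m n : ℕ) (w w' : A × A) : A × A :=
  (w.1 ^ p ^ m * w'.1 - w.1 * w'.1 ^ p ^ m,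
   w.1 * w'.2 ^ p ^ (n - m) - w.2 ^ p ^ (n - m) * w'.1)

/-- **Endo's map is not symmetric for `p > 2`.**
Let `p > 2` be a prime, `k₀` a field of characteristic `p`, `k = k₀(t)` and
`1 ≤ m ≤ n`.  Then there exist a field extension `K/k` and points `g, g'` of
`G₂(K) = {(x,y) ∈ K² | x = -t*x^(p^(2m)) + y^(p^n)}` with `h(g, g') ≠ h(g', g)`,
where `h((x,y),(x',y')) = (x^(p^m)*x' - x*x'^(p^m), x*y'^(p^(n-m)) - y^(p^(n-m))*x')`. -/
theorem endo_map_not_symmetric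
    (p : ℕ) (hp : p.Prime) (hp2 : 2 < p)
    (k₀ : Type) [Field k₀] [CharP k₀ p]
    (m n : ℕ) (hm : 1 ≤ m) (hmn : m ≤ n) :
    ∃ (K : FieldExtension (RatFunc k₀)) (g g' : K.carrier × K.carrier),
      (g.1 = -(algebraMap (RatFunc k₀) K.carrier RatFunc.X) * g.1 ^ p ^ (2 * m)
        + g.2 ^ p ^ n) ∧
      (g'.1 = -(algebraMap (RatFunc k₀) K.carrier RatFunc.X) * g'.1 ^ p ^ (2 * m)
        + g'.2 ^ p ^ n) ∧
      endoPairing p m n g g' ≠ endoPairing p m n g' g := by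
  haveI := Fact.mk hp
  haveI : CharP (RatFunc k₀) p :=
    charP_of_injective_algebraMap (algebraMap k₀ (RatFunc k₀)).injective p
  set L := AlgebraicClosure (RatFunc k₀) with hL
  haveI : CharP L p := inferInstance
  haveI : PerfectRing L p := inferInstance
  -- p^n-th roots exist in L
  have root : ∀ z : L, ∃ y : L, y ^ p ^ n = z := by
    intro z
    obtain ⟨y, hy⟩ := (bijective_iterateFrobenius L p n).2 z
    exact ⟨y, by rwa [iterateFrobenius_def] at hy⟩
  set T : L := algebraMap (RatFunc k₀) L RatFunc.X with hT
  obtain ⟨yT, hyT⟩ := root (T + T * T ^ p ^ (2 * m))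
  obtain ⟨y1, hy1⟩ := root (1 + T)
  refine ⟨⟨L⟩, (T, yT), (1, y1), ?_, ?_, ?_⟩
  · show T = -T * T ^ p ^ (2 * m) + yT ^ p ^ n
    rw [hyT]; ring
  · show (1 : L) = -T * 1 ^ p ^ (2 * m) + y1 ^ p ^ n
    rw [hy1]; ring
  · -- the first components are `T^(p^m) - T` and `T - T^(p^m)`
    intro hcontra
    have h1 : T ^ p ^ m * 1 - T * 1 ^ p ^ m = 1 ^ p ^ m * T - 1 * T ^ p ^ m :=
      congrArg Prod.fst hcontra
    have h2 : (2 : L) * (T ^ p ^ m - T) = 0 := by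
      rw [one_pow, mul_one, one_mul, one_mul] at h1
      linear_combination h1
    have h2ne : (2 : L) ≠ 0 := by
      have : ((2 : ℕ) : L) ≠ 0 := by
        rw [Ne, CharP.cast_eq_zero_iff L p]
        intro hd
        exact absurd (Nat.le_of_dvd (by norm_num) hd) (not_le.mpr hp2)
      simpa using this
    have hTT : T ^ p ^ m - T = 0 := by
      rcases mul_eq_zero.mp h2 with h | h
      · exact absurd h h2ne
      · exact h
    -- hence X^(p^m) = X in RatFunc k₀, contradiction
    have hX : (RatFunc.X : RatFunc k₀) ^ p ^ m = RatFunc.X := by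
      apply (algebraMap (RatFunc k₀) L).injective
      rw [map_pow]
      rw [sub_eq_zero] at hTT
      exact hTT
    have hXpoly : (Polynomial.X : Polynomial k₀) ^ p ^ m = Polynomial.X := by
      apply IsFractionRing.injective (Polynomial k₀) (RatFunc k₀)
      rw [map_pow]
      simpa [RatFunc.algebraMap_X] using hX
    have hdeg := congrArg Polynomial.natDegree hXpoly
    rw [Polynomial.natDegree_X_pow, Polynomial.natDegree_X] at hdeg
    have hpm : 2 ≤ p ^ m := by
      calc 2 ≤ p := le_of_lt hp2
      _ = p ^ 1 := (pow_one p).symm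
      _ ≤ p ^ m := Nat.pow_le_pow_right hp.pos hm
    omega
end

section
/- Let p = 2, k₀ a field of characteristic 2, and k = k₀(t). Let G₁ = {X = −X² − tY²} ⊂ G_a² and G₂ = {X = X⁴ + tY⁴} ⊂ G_a² (Gabber's groups for p = 2). Then G₁ is a conic in A²_k with a k-rational point, hence birational to P¹_k, and G₁(k)/R is trivial. Consequently, for every central extension G of G₂ by G₁ constructed from a bi-additive map h : G₂ × G₂ → G₁ (so that G = G₁ × G₂ as a k-variety with multiplication twisted by h), one has G(K)/R = G₁(K)/R × G₂(K)/R = G₂(K)/R for every field extension K/k, and in particular G(K)/R is commutative for every extension K/k. -/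
noncomputable section

/-- Points `(x, y)` of Gabber's conic `G₁ = {X = -X² - tY²}`, relative to a chosen
image `τ` of the parameter `t`. -/
def conicSol {R : Type} [CommRing R] (τ : R) (v : R × R) : Prop :=
  v.1 = -v.1 ^ 2 - τ * v.2 ^ 2

/-- Points `(x, y)` of Gabber's curve `G₂ = {X = X⁴ + tY⁴}`, relative to a chosen
image `τ` of the parameter `t`. -/
def quarticSol {R : Type} [CommRing R] (τ : R) (v : R × R) : Prop :=
  v.1 = v.1 ^ 4 + τ * v.2 ^ 4

/-- Points of `G = G₁ × G₂`. -/
def gSol {R : Type} [CommRing R] (τ : R) (w : (R × R) × (R × R)) : Prop :=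
  conicSol τ w.1 ∧ quarticSol τ w.2

/-- The twisted multiplication of `G = G₁ × G₂` attached to `h`. -/
def gMul {K : Type} [Field K] (h : (K × K) → (K × K) → (K × K))
    (w w' : (K × K) × (K × K)) : (K × K) × (K × K) :=
  (w.1 + w'.1 + h w.2 w'.2, w.2 + w'.2)

/-- The inclusion `K → (K[T])_f` of constants into the coordinate ring of the basic
open set `{f ≠ 0} ⊆ 𝔸¹_K ⊆ ℙ¹_K`. -/
def awayConst (K : Type) [Field K] (f : Polynomial K) : K →+* Localization.Away f :=
  (algebraMap (Polynomial K) (Localization.Away f)).comp Polynomial.C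

/-- Evaluation `(K[T])_f → K` at a point `c ∈ K` with `f(c) ≠ 0`. -/
def awayEval (K : Type) [Field K] (f : Polynomial K) (c : K) (hc : f.eval c ≠ 0) :
    Localization.Away f →+* K :=
  Localization.awayLift (Polynomial.evalRingHom c) f
    (by simpa using isUnit_iff_ne_zero.mpr hc)

section RLink

variable (k₀ : Type) [Field k₀] (K : Type) [Field K] [Algebra (RatFunc k₀) K]

/-- Two `K`-points of `G₁` are directly R-linked: there is a `K`-rational map
`ℙ¹_K ⇢ (G₁)_K` (concretely, a pair of rational functions regular on a basic open set
`{f ≠ 0}` with `f(0) ≠ 0 ≠ f(1)`, satisfying the equation of `G₁`) defined at `0` and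
`1` and sending `0`, `1` to the two points. -/
def RLinkedConic (P Q : K × K) : Prop :=
  ∃ (f : Polynomial K) (h0 : f.eval 0 ≠ 0) (h1 : f.eval 1 ≠ 0)
    (v : Localization.Away f × Localization.Away f),
    conicSol (awayConst K f (algebraMap (RatFunc k₀) K RatFunc.X)) v ∧
    (awayEval K f 0 h0 v.1, awayEval K f 0 h0 v.2) = P ∧
    (awayEval K f 1 h1 v.1, awayEval K f 1 h1 v.2) = Q

/-- R-equivalence on `G₁(K)`. -/
def REquivConic : K × K → K × K → Prop :=
  Relation.EqvGen (RLinkedConic k₀ K)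

/-- Two `K`-points of `G₂` are directly R-linked. -/
def RLinkedQuartic (P Q : K × K) : Prop :=
  ∃ (f : Polynomial K) (h0 : f.eval 0 ≠ 0) (h1 : f.eval 1 ≠ 0)
    (v : Localization.Away f × Localization.Away f),
    quarticSol (awayConst K f (algebraMap (RatFunc k₀) K RatFunc.X)) v ∧
    (awayEval K f 0 h0 v.1, awayEval K f 0 h0 v.2) = P ∧
    (awayEval K f 1 h1 v.1, awayEval K f 1 h1 v.2) = Q

/-- R-equivalence on `G₂(K)`. -/
def REquivQuartic : K × K → K × K → Prop :=
  Relation.EqvGen (RLinkedQuartic k₀ K)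

/-- Two `K`-points of `G = G₁ × G₂` are directly R-linked. -/
def RLinkedG (P Q : (K × K) × (K × K)) : Prop :=
  ∃ (f : Polynomial K) (h0 : f.eval 0 ≠ 0) (h1 : f.eval 1 ≠ 0)
    (w : (Localization.Away f × Localization.Away f) ×
      (Localization.Away f × Localization.Away f)),
    gSol (awayConst K f (algebraMap (RatFunc k₀) K RatFunc.X)) w ∧
    ((awayEval K f 0 h0 w.1.1, awayEval K f 0 h0 w.1.2),
      (awayEval K f 0 h0 w.2.1, awayEval K f 0 h0 w.2.2)) = P ∧
    ((awayEval K f 1 h1 w.1.1, awayEval K f 1 h1 w.1.2),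
      (awayEval K f 1 h1 w.2.1, awayEval K f 1 h1 w.2.2)) = Q

/-- R-equivalence on `G(K)`. -/
def REquivG : (K × K) × (K × K) → (K × K) × (K × K) → Prop :=
  Relation.EqvGen (RLinkedG k₀ K)

end RLink

section GabberAux

open Polynomial

variable {k : Type} [Field k]

def NotSq (t : k) : Prop := ∀ s : k, s ^ 2 ≠ t

lemma X_notSq (k₀ : Type) [Field k₀] : NotSq (RatFunc.X : RatFunc k₀) := by
  intro s hs
  have hsne : s ≠ 0 := by
    rintro rfl; simp at hs; exact RatFunc.X_ne_zero hs.symm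
  have h1 : (s ^ 2).intDegree = (RatFunc.X : RatFunc k₀).intDegree := by rw [hs]
  rw [pow_two, RatFunc.intDegree_mul hsne hsne, RatFunc.intDegree_X] at h1
  omega

lemma dpoly_prime {t : k} (h2 : (2:k) = 0) (ht0 : t ≠ 0) (hns : NotSq t) :
    Prime (Polynomial.C t * Polynomial.X ^ 2 + 1 : k[X]) := by
  have hm : (Polynomial.X ^ 2 + Polynomial.C t⁻¹ : k[X]).Monic :=
    monic_X_pow_add_C _ (by norm_num)
  have hdeg : (Polynomial.X ^ 2 + Polynomial.C t⁻¹ : k[X]).natDegree = 2 :=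
    natDegree_X_pow_add_C
  have hirr : Irreducible (Polynomial.X ^ 2 + Polynomial.C t⁻¹ : k[X]) := by
    by_contra hni
    obtain ⟨c₁, c₂, hmul, hadd⟩ := (hm.not_irreducible_iff_exists_add_mul_eq_coeff hdeg).mp hni
    simp only [coeff_add, coeff_X_pow, coeff_C] at hmul hadd
    norm_num at hmul hadd
    have hc2 : c₂ = -c₁ := by linear_combination -hadd
    have hc1 : c₁ ≠ 0 := by
      rintro rfl
      rw [hc2] at hmul
      simp at hmul
      exact ht0 hmul
    apply hns c₁⁻¹
    have h3 : t⁻¹ = -c₁ ^ 2 := by rw [hmul, hc2]; ring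
    have h4 : t = (-c₁ ^ 2)⁻¹ := by rw [← h3, inv_inv]
    rw [h4, inv_pow]
    congr 1
    linear_combination c₁ ^ 2 * h2
  have key : (Polynomial.X ^ 2 + Polynomial.C t⁻¹) * Polynomial.C t
      = (Polynomial.C t * Polynomial.X ^ 2 + 1 : k[X]) := by
    rw [add_mul, mul_comm (Polynomial.X ^ 2), ← Polynomial.C_mul, inv_mul_cancel₀ ht0,
      Polynomial.C_1]
  have hassoc : Associated (Polynomial.X ^ 2 + Polynomial.C t⁻¹ : k[X])
      (Polynomial.C t * Polynomial.X ^ 2 + 1) :=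
    ⟨(Polynomial.isUnit_C.mpr (isUnit_iff_ne_zero.mpr ht0)).unit, key⟩
  exact hassoc.prime hirr.prime

section Core

variable (t : k)

def dpoly : k[X] := Polynomial.C t * Polynomial.X ^ 2 + 1

lemma dpoly_ne : dpoly t ≠ 0 := by
  intro h
  have := congrArg (fun q => Polynomial.coeff q 0) h
  simp [dpoly, Polynomial.coeff_X_pow] at this

lemma dpoly_natDegree (ht0 : t ≠ 0) : (dpoly t).natDegree = 2 := by
  rw [dpoly, ← Polynomial.C_1, Polynomial.natDegree_add_C, Polynomial.natDegree_C_mul ht0,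
    Polynomial.natDegree_X_pow]

def dL : RatFunc k := algebraMap k[X] (RatFunc k) (dpoly t)

lemma dL_ne : dL t ≠ 0 := RatFunc.algebraMap_ne_zero (dpoly_ne t)

def Phi (M : ℕ) (p : k[X]) : k[X] :=
  ∑ i ∈ Finset.range (M + 1), Polynomial.C (p.coeff i) * Polynomial.X ^ i * dpoly t ^ (M - i)

lemma sum_eval {M : ℕ} {p : k[X]} (hpM : p.natDegree ≤ M) :
    Polynomial.aeval (RatFunc.X * (dL t)⁻¹) p * dL t ^ M
      = algebraMap k[X] (RatFunc k) (Phi t M p) := by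
  rw [Polynomial.aeval_eq_sum_range' (Nat.lt_succ_of_le hpM), Finset.sum_mul, Phi, map_sum]
  refine Finset.sum_congr rfl ?_
  intro i hi
  rw [Finset.mem_range, Nat.lt_succ_iff] at hi
  rw [map_mul, map_mul, map_pow, map_pow, RatFunc.algebraMap_X, RatFunc.algebraMap_C]
  rw [Algebra.smul_def, RatFunc.algebraMap_eq_C, mul_pow]
  have hd : dL t ^ (M - i) * dL t ^ i = dL t ^ M := by rw [← pow_add]; congr 1; omega
  simp only [dL] at hd ⊢
  rw [inv_pow]
  have hdine : (algebraMap k[X] (RatFunc k) (dpoly t)) ^ i ≠ 0 :=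
    pow_ne_zero _ (dL_ne t)
  field_simp
  linear_combination (RatFunc.C (p.coeff i) * RatFunc.X ^ i) * hd.symm

lemma dvd_phi_sub (M : ℕ) (p : k[X]) :
    dpoly t ∣ Phi t M p - Polynomial.C (p.coeff M) * Polynomial.X ^ M := by
  rw [Phi, Finset.sum_range_succ]
  simp only [Nat.sub_self, pow_zero, mul_one, add_sub_cancel_right]
  refine Finset.dvd_sum ?_
  intro i hi
  rw [Finset.mem_range] at hi
  exact Dvd.dvd.mul_left (dvd_pow_self (dpoly t) (by omega : M - i ≠ 0)) _

lemma key_coeffs (hp : Prime (dpoly t)) (ht0 : t ≠ 0) {M : ℕ} (hM : 1 ≤ M) {a b : k[X]}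
    (ha : a.natDegree ≤ M) (hb : b.natDegree ≤ M - 1)
    (H : Polynomial.aeval (RatFunc.X * (dL t)⁻¹) a
        + Polynomial.aeval (RatFunc.X * (dL t)⁻¹) b * (dL t)⁻¹ = 0) :
    a.coeff M = 0 ∧ b.coeff (M - 1) = 0 := by
  have hMsplit : dL t ^ M = dL t ^ (M - 1) * dL t := by rw [← pow_succ]; congr 1; omega
  have h2' : (dL t)⁻¹ * dL t ^ M = dL t ^ (M - 1) := by
    rw [hMsplit, mul_comm, mul_assoc, mul_inv_cancel₀ (dL_ne t), mul_one]
  have h0 : algebraMap k[X] (RatFunc k) (Phi t M a + Phi t (M - 1) b) = 0 := by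
    rw [map_add, ← sum_eval t ha, ← sum_eval t hb]
    calc Polynomial.aeval (RatFunc.X * (dL t)⁻¹) a * dL t ^ M
          + Polynomial.aeval (RatFunc.X * (dL t)⁻¹) b * dL t ^ (M - 1)
        = (Polynomial.aeval (RatFunc.X * (dL t)⁻¹) a
          + Polynomial.aeval (RatFunc.X * (dL t)⁻¹) b * (dL t)⁻¹) * dL t ^ M := by
          linear_combination Polynomial.aeval (RatFunc.X * (dL t)⁻¹) b * h2'.symm
      _ = 0 := by rw [H, zero_mul]
  have hQ : Phi t M a + Phi t (M - 1) b = 0 :=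
    RatFunc.algebraMap_injective k (show algebraMap k[X] (RatFunc k) _
      = algebraMap k[X] (RatFunc k) 0 by rw [h0, map_zero])
  have hXM : (Polynomial.X : k[X]) ^ M = Polynomial.X ^ (M - 1) * Polynomial.X := by
    rw [← pow_succ]; congr 1; omega
  have hdvd : dpoly t ∣ (Polynomial.C (a.coeff M) * Polynomial.X
      + Polynomial.C (b.coeff (M - 1))) * Polynomial.X ^ (M - 1) := by
    have h1 := dvd_phi_sub t M a
    have h2 := dvd_phi_sub t (M - 1) b
    have h3 : (Phi t M a - Polynomial.C (a.coeff M) * Polynomial.X ^ M)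
        + (Phi t (M - 1) b - Polynomial.C (b.coeff (M - 1)) * Polynomial.X ^ (M - 1))
        = -((Polynomial.C (a.coeff M) * Polynomial.X
          + Polynomial.C (b.coeff (M - 1))) * Polynomial.X ^ (M - 1)) := by
      rw [hXM]; linear_combination hQ
    exact dvd_neg.mp (h3 ▸ dvd_add h1 h2)
  rcases hp.2.2 _ _ hdvd with hlin | hpow
  · by_cases h0lin : (Polynomial.C (a.coeff M) * Polynomial.X
        + Polynomial.C (b.coeff (M - 1)) : k[X]) = 0
    · constructor
      · have := congrArg (fun q => Polynomial.coeff q 1) h0lin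
        simpa using this
      · have := congrArg (fun q => Polynomial.coeff q 0) h0lin
        simpa using this
    · exfalso
      have hle := Polynomial.natDegree_le_of_dvd hlin h0lin
      have := Polynomial.natDegree_linear_le (a := a.coeff M) (b := b.coeff (M - 1))
      rw [dpoly_natDegree t ht0] at hle
      omega
  · exfalso
    have hX := hp.dvd_of_dvd_pow hpow
    have hle := Polynomial.natDegree_le_of_dvd hX Polynomial.X_ne_zero
    rw [dpoly_natDegree t ht0, Polynomial.natDegree_X] at hle
    omega

lemma core (hp : Prime (dpoly t)) (ht0 : t ≠ 0) {a b : k[X]}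
    (H : Polynomial.aeval (RatFunc.X * (dL t)⁻¹) a
        + Polynomial.aeval (RatFunc.X * (dL t)⁻¹) b * (dL t)⁻¹ = 0) :
    a = 0 ∧ b = 0 := by
  have hb : b = 0 := by
    by_contra hb
    set M := max a.natDegree (b.natDegree + 1) with hMdef
    have hM1 : 1 ≤ M := le_trans (by omega) (le_max_right a.natDegree (b.natDegree + 1))
    have haM : a.natDegree ≤ M := le_max_left _ _
    have hbM : b.natDegree ≤ M - 1 := by
      have := le_max_right a.natDegree (b.natDegree + 1); omega
    obtain ⟨hα, hβ⟩ := key_coeffs t hp ht0 hM1 haM hbM H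
    rcases le_or_gt a.natDegree (b.natDegree + 1) with h | h
    · have hMeq : M = b.natDegree + 1 := max_eq_right h
      apply hb
      apply Polynomial.leadingCoeff_eq_zero.mp
      rw [Polynomial.leadingCoeff, show b.natDegree = M - 1 by omega]
      exact hβ
    · have hMeq : M = a.natDegree := max_eq_left (by omega)
      have ha0 : a = 0 := by
        apply Polynomial.leadingCoeff_eq_zero.mp
        rw [Polynomial.leadingCoeff, ← hMeq]; exact hα
      rw [ha0, Polynomial.natDegree_zero] at h
      omega
  refine ⟨?_, hb⟩
  rw [hb] at H
  simp only [map_zero, zero_mul, add_zero] at H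
  rcases Nat.eq_zero_or_pos a.natDegree with h0 | hpos
  · obtain ⟨c, rfl⟩ := Polynomial.natDegree_eq_zero.mp h0
    rw [Polynomial.aeval_C] at H
    rw [show c = 0 from (algebraMap k (RatFunc k)).injective (by rw [H, map_zero]), map_zero]
  · have H' : Polynomial.aeval (RatFunc.X * (dL t)⁻¹) a
        + Polynomial.aeval (RatFunc.X * (dL t)⁻¹) (0 : k[X]) * (dL t)⁻¹ = 0 := by
      simpa using H
    obtain ⟨hα, -⟩ := key_coeffs t hp ht0 hpos le_rfl (by simp) H'
    apply Polynomial.leadingCoeff_eq_zero.mp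
    exact hα

end Core

section Assembly

def Fmv (t : k) : MvPolynomial (Fin 2) k :=
  MvPolynomial.X 0 - (-(MvPolynomial.X 0) ^ 2 - MvPolynomial.C t * (MvPolynomial.X 1) ^ 2)

def xL (t : k) : RatFunc k := (dL t)⁻¹

def yL (t : k) : RatFunc k := RatFunc.X * xL t

def phimv (t : k) : MvPolynomial (Fin 2) k →ₐ[k] RatFunc k :=
  MvPolynomial.aeval ![xL t, yL t]

variable (t : k)

lemma dL_eq : dL t = RatFunc.C t * RatFunc.X ^ 2 + 1 := by
  simp [dL, dpoly, map_add, map_mul, map_pow, RatFunc.algebraMap_C, RatFunc.algebraMap_X]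

lemma two_eq_zero_ratFunc (h2 : (2 : k) = 0) : (2 : RatFunc k) = 0 := by
  have : (2 : RatFunc k) = algebraMap k (RatFunc k) 2 := (map_ofNat _ 2).symm
  rw [this, h2, map_zero]

lemma hrel (h2 : (2 : k) = 0) :
    xL t + xL t ^ 2 + algebraMap k (RatFunc k) t * yL t ^ 2 = 0 := by
  have h2L := two_eq_zero_ratFunc (k := k) h2
  have hd := dL_eq t
  have hD2 : dL t ^ 2 ≠ 0 := pow_ne_zero _ (dL_ne t)
  have e1 : xL t * dL t = 1 := by rw [xL]; exact inv_mul_cancel₀ (dL_ne t)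
  rw [RatFunc.algebraMap_eq_C]
  have key : (xL t + xL t ^ 2 + RatFunc.C t * yL t ^ 2) * dL t ^ 2 = 2 * dL t := by
    rw [yL]
    linear_combination (dL t + xL t * dL t + 1
      + RatFunc.C t * RatFunc.X ^ 2 * (xL t * dL t + 1)) * e1 - hd
  have key0 : (xL t + xL t ^ 2 + RatFunc.C t * yL t ^ 2) * dL t ^ 2 = 0 := by
    rw [key, h2L, zero_mul]
  rcases mul_eq_zero.mp key0 with h | h
  · exact h
  · exact absurd h hD2

lemma phimv_X0 : phimv t (MvPolynomial.X 0) = xL t := by simp [phimv]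
lemma phimv_X1 : phimv t (MvPolynomial.X 1) = yL t := by simp [phimv]

lemma phimv_C (c : k) : phimv t (MvPolynomial.C c) = algebraMap k (RatFunc k) c := by
  simp [phimv]

lemma phimv_F (h2 : (2 : k) = 0) : phimv t (Fmv t) = 0 := by
  have h := hrel t h2
  simp only [Fmv, map_sub, map_neg, map_pow, map_mul, phimv_X0, phimv_X1, phimv_C]
  linear_combination h

end Assembly

section Kernel

/-- iso with k[Y][X] -/
def iota (k : Type) [Field k] : MvPolynomial (Fin 2) k ≃ₐ[k] Polynomial (Polynomial k) :=
  (MvPolynomial.finSuccEquiv k 1).trans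
    (Polynomial.mapAlgEquiv ((MvPolynomial.finSuccEquiv k 0).trans
      (Polynomial.mapAlgEquiv (MvPolynomial.isEmptyAlgEquiv k (Fin 0)))))

lemma iota_X0 : iota k (MvPolynomial.X 0) = Polynomial.X := by
  rw [iota, AlgEquiv.trans_apply, MvPolynomial.finSuccEquiv_X_zero, Polynomial.coe_mapAlgEquiv,
    Polynomial.map_X]

lemma iota_X1 : iota k (MvPolynomial.X 1) = Polynomial.C Polynomial.X := by
  have h1 : (1 : Fin 2) = Fin.succ 0 := rfl
  rw [iota, AlgEquiv.trans_apply, h1, MvPolynomial.finSuccEquiv_X_succ,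
    Polynomial.coe_mapAlgEquiv, Polynomial.map_C]
  congr 1
  simp [MvPolynomial.finSuccEquiv_X_zero]

lemma iota_C (c : k) : iota k (MvPolynomial.C c) = Polynomial.C (Polynomial.C c) := by
  have : (MvPolynomial.C c : MvPolynomial (Fin 2) k) = algebraMap k _ c := rfl
  rw [this, AlgEquiv.commutes]
  rfl

variable (t : k)

/-- the conic polynomial in `k[Y][X]` -/
def Fb (t : k) : Polynomial (Polynomial k) :=
  Polynomial.X ^ 2 + (Polynomial.X + Polynomial.C (Polynomial.C t * Polynomial.X ^ 2))

lemma iota_F : iota k (Fmv t) = Fb t := by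
  rw [Fmv, Fb]
  simp only [map_sub, map_neg, map_pow, map_mul, iota_X0, iota_X1, iota_C]
  ring

lemma Fb_monic : (Fb t).Monic := by
  apply Polynomial.monic_X_pow_add
  apply lt_of_le_of_lt (Polynomial.degree_add_le _ _)
  simp only [Polynomial.degree_X, Polynomial.degree_C_le]
  rw [max_lt_iff]
  constructor
  · exact_mod_cast one_lt_two
  · exact lt_of_le_of_lt Polynomial.degree_C_le (by norm_num)

lemma Fb_degree : (Fb t).degree = 2 := by
  rw [Fb]
  rw [Polynomial.degree_add_eq_left_of_degree_lt]
  · exact Polynomial.degree_X_pow 2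
  · rw [Polynomial.degree_X_pow]
    apply lt_of_le_of_lt (Polynomial.degree_add_le _ _)
    rw [max_lt_iff]
    exact ⟨by rw [Polynomial.degree_X]; exact_mod_cast one_lt_two,
      lt_of_le_of_lt Polynomial.degree_C_le (by norm_num)⟩

/-- evaluation k[Y][X] → RatFunc k -/
def phiP (t : k) : Polynomial (Polynomial k) →ₐ[k] RatFunc k :=
  Polynomial.aevalTower (Polynomial.aeval (yL t)) (xL t)

lemma phimv_eq_phiP : phimv t = (phiP t).comp (iota k).toAlgHom := by
  apply MvPolynomial.algHom_ext
  intro i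
  match i with
  | 0 => simp [phimv, phiP, iota_X0]
  | 1 =>
    simp only [AlgHom.comp_apply, AlgEquiv.toAlgHom_eq_coe, AlgHom.coe_coe, iota_X1, phimv_X1,
      phiP, Polynomial.aevalTower_C, Polynomial.aeval_X]
    erw [iota_X1]
    simp only [Polynomial.aevalTower_C, Polynomial.aeval_X]

lemma phiP_iota (g : MvPolynomial (Fin 2) k) : phiP t (iota k g) = phimv t g := by
  rw [phimv_eq_phiP]; rfl

lemma phiP_F (h2 : (2 : k) = 0) : phiP t (Fb t) = 0 := by
  rw [← iota_F, phiP_iota]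
  exact phimv_F t h2

lemma ker_phimv (hp : Prime (dpoly t)) (ht0 : t ≠ 0) (h2 : (2 : k) = 0)
    {g : MvPolynomial (Fin 2) k} (hg : phimv t g = 0) : g ∈ Ideal.span {Fmv t} := by
  set G := iota k g with hG
  have hmod := Polynomial.modByMonic_add_div G (Fb t)
  set r := G %ₘ Fb t with hr
  have hrd : r.degree ≤ 1 := by
    have := Polynomial.degree_modByMonic_lt G (Fb_monic t)
    rw [Fb_degree] at this
    exact Order.le_of_lt_succ (by exact_mod_cast this)
  have hre : r = Polynomial.C (r.coeff 1) * Polynomial.X + Polynomial.C (r.coeff 0) :=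
    Polynomial.eq_X_add_C_of_degree_le_one hrd
  have hφG : phiP t G = 0 := by
    rw [hG, phiP_iota]
    exact hg
  have hφr : phiP t r = 0 := by
    have := congrArg (phiP t) hmod
    rw [map_add, map_mul, phiP_F t h2, zero_mul, add_zero, hφG] at this
    exact this
  have hcore : Polynomial.aeval (RatFunc.X * (dL t)⁻¹) (r.coeff 0)
      + Polynomial.aeval (RatFunc.X * (dL t)⁻¹) (r.coeff 1) * (dL t)⁻¹ = 0 := by
    have : phiP t r = Polynomial.aeval (yL t) (r.coeff 1) * xL t
        + Polynomial.aeval (yL t) (r.coeff 0) := by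
      rw [hre] at hφr ⊢
      simp [phiP, Polynomial.aevalTower_C, Polynomial.aevalTower_X]
    rw [hφr] at this
    simp only [yL, xL] at this
    linear_combination -this
  obtain ⟨h0, h1⟩ := core t hp ht0 hcore
  have hr0 : r = 0 := by rw [hre, h0, h1]; simp
  rw [hr0, zero_add] at hmod
  rw [Ideal.mem_span_singleton]
  refine ⟨(iota k).symm (G /ₘ Fb t), ?_⟩
  apply (iota k).injective
  rw [map_mul, iota_F, AlgEquiv.apply_symm_apply, hmod, hG]

end Kernel

section FracEquiv

variable (t : k)

lemma alg_eq_aeval (p : k[X]) :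
    algebraMap k[X] (RatFunc k) p = Polynomial.aeval (RatFunc.X : RatFunc k) p := by
  have h : (Polynomial.aeval (RatFunc.X : RatFunc k) : k[X] →ₐ[k] RatFunc k)
      = IsScalarTower.toAlgHom k k[X] (RatFunc k) := by
    apply Polynomial.algHom_ext
    simp [RatFunc.algebraMap_X]
  exact (DFunLike.congr_fun h p).symm

lemma sum2 (e : ℕ) (p : k[X]) (hpe : p.natDegree ≤ e) :
    phimv t (∑ i ∈ Finset.range (e + 1),
      MvPolynomial.C (p.coeff i) * MvPolynomial.X 1 ^ i * MvPolynomial.X 0 ^ (e - i))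
      = algebraMap k[X] (RatFunc k) p * xL t ^ e := by
  rw [alg_eq_aeval, Polynomial.aeval_eq_sum_range' (Nat.lt_succ_of_le hpe), Finset.sum_mul,
    map_sum]
  refine Finset.sum_congr rfl fun i hi => ?_
  rw [Finset.mem_range, Nat.lt_succ_iff] at hi
  rw [map_mul, map_mul, map_pow, map_pow, phimv_X0, phimv_X1, phimv_C, yL, Algebra.smul_def]
  have hxx : xL t ^ i * xL t ^ (e - i) = xL t ^ e := by rw [← pow_add]; congr 1; omega
  rw [mul_pow]
  linear_combination (algebraMap k (RatFunc k) (p.coeff i) * RatFunc.X ^ i) * hxx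

set_option maxHeartbeats 1000000 in
set_option synthInstance.maxHeartbeats 400000 in
theorem conic_function_field (hp : Prime (dpoly t)) (ht0 : t ≠ 0) (h2 : (2 : k) = 0) :
    Nonempty ((FractionRing (MvPolynomial (Fin 2) k ⧸ Ideal.span {Fmv t})) ≃ₐ[k] RatFunc k) := by
  have hvanish : ∀ a ∈ Ideal.span {Fmv t}, phimv t a = 0 := by
    intro a ha
    rw [Ideal.mem_span_singleton] at ha
    obtain ⟨c, rfl⟩ := ha
    rw [map_mul, phimv_F t h2, zero_mul]
  let φ : (MvPolynomial (Fin 2) k ⧸ Ideal.span {Fmv t}) →ₐ[k] RatFunc k :=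
    Ideal.Quotient.liftₐ (Ideal.span {Fmv t}) (phimv t) hvanish
  have hφmk : ∀ g, φ (Ideal.Quotient.mk _ g) = phimv t g := fun g => by
    rw [Ideal.Quotient.liftₐ_apply]
    rfl
  have hinj : Function.Injective φ := by
    rw [injective_iff_map_eq_zero]
    intro a ha
    obtain ⟨g, rfl⟩ := Ideal.Quotient.mk_surjective a
    rw [hφmk] at ha
    rw [Ideal.Quotient.eq_zero_iff_mem]
    exact ker_phimv t hp ht0 h2 ha
  haveI : IsDomain (MvPolynomial (Fin 2) k ⧸ Ideal.span {Fmv t}) :=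
    Function.Injective.isDomain φ.toRingHom hinj
  letI : Algebra (MvPolynomial (Fin 2) k ⧸ Ideal.span {Fmv t}) (RatFunc k) :=
    φ.toRingHom.toAlgebra
  haveI : IsScalarTower k (MvPolynomial (Fin 2) k ⧸ Ideal.span {Fmv t}) (RatFunc k) :=
    IsScalarTower.of_algebraMap_eq fun c => (φ.commutes c).symm
  have halg : ∀ a : (MvPolynomial (Fin 2) k ⧸ Ideal.span {Fmv t}),
      algebraMap _ (RatFunc k) a = φ a := fun _ => rfl
  have hxLne : xL t ≠ 0 := inv_ne_zero (dL_ne t)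
  haveI : IsFractionRing (MvPolynomial (Fin 2) k ⧸ Ideal.span {Fmv t}) (RatFunc k) := by
    constructor
    constructor
    · rintro ⟨y, hy⟩
      rw [isUnit_iff_ne_zero]
      simp only [halg]
      intro h0
      have : y = 0 := hinj (by rw [h0, map_zero])
      rw [this] at hy
      exact zero_notMem_nonZeroDivisors hy
    · intro z
      set e := max z.num.natDegree z.denom.natDegree with he
      set Sp : MvPolynomial (Fin 2) k := ∑ i ∈ Finset.range (e + 1),
        MvPolynomial.C (z.num.coeff i) * MvPolynomial.X 1 ^ i * MvPolynomial.X 0 ^ (e - i)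
        with hSpdef
      set Sq : MvPolynomial (Fin 2) k := ∑ i ∈ Finset.range (e + 1),
        MvPolynomial.C (z.denom.coeff i) * MvPolynomial.X 1 ^ i * MvPolynomial.X 0 ^ (e - i)
        with hSqdef
      have hSp : φ (Ideal.Quotient.mk _ Sp) = algebraMap k[X] (RatFunc k) z.num * xL t ^ e := by
        rw [hφmk]; exact sum2 t e z.num (le_max_left _ _)
      have hSq : φ (Ideal.Quotient.mk _ Sq)
          = algebraMap k[X] (RatFunc k) z.denom * xL t ^ e := by
        rw [hφmk]; exact sum2 t e z.denom (le_max_right _ _)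
      have hq0 : algebraMap k[X] (RatFunc k) z.denom ≠ 0 :=
        RatFunc.algebraMap_ne_zero z.denom_ne_zero
      have hSqne : φ (Ideal.Quotient.mk _ Sq) ≠ 0 := by
        rw [hSq]
        exact mul_ne_zero hq0 (pow_ne_zero _ hxLne)
      refine ⟨⟨Ideal.Quotient.mk _ Sp, ⟨Ideal.Quotient.mk _ Sq, ?_⟩⟩, ?_⟩
      · refine mem_nonZeroDivisors_of_ne_zero ?_
        intro h0
        exact hSqne (by rw [h0, map_zero])
      · simp only [halg, hSp, hSq]
        have hzd : algebraMap k[X] (RatFunc k) z.num = z * algebraMap k[X] (RatFunc k) z.denom :=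
          (div_eq_iff hq0).mp (RatFunc.num_div_denom z)
        linear_combination (-(xL t ^ e)) * hzd
    · intro x y h
      simp only [halg] at h
      exact ⟨1, by rw [hinj h]⟩
  exact ⟨AlgEquiv.restrictScalars k
    (IsLocalization.algEquiv (nonZeroDivisors (MvPolynomial (Fin 2) k ⧸ Ideal.span {Fmv t}))
      (FractionRing (MvPolynomial (Fin 2) k ⧸ Ideal.span {Fmv t})) (RatFunc k))⟩

end FracEquiv

section Degree

variable (t : k)

lemma Fmv_totalDegree : (Fmv t).totalDegree = 2 := by
  have he : Fmv t = MvPolynomial.X 0 + (MvPolynomial.X 0) ^ 2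
      + MvPolynomial.C t * (MvPolynomial.X 1) ^ 2 := by rw [Fmv]; ring
  rw [he]
  apply le_antisymm
  · refine le_trans (MvPolynomial.totalDegree_add _ _) (max_le
      (le_trans (MvPolynomial.totalDegree_add _ _) (max_le ?_ ?_)) ?_)
    · rw [MvPolynomial.totalDegree_X]; omega
    · exact le_trans (MvPolynomial.totalDegree_pow _ _)
        (by rw [MvPolynomial.totalDegree_X])
    · refine le_trans (MvPolynomial.totalDegree_mul _ _) ?_
      rw [MvPolynomial.totalDegree_C, MvPolynomial.totalDegree_X_pow]
  · have hc : MvPolynomial.coeff (Finsupp.single (0 : Fin 2) 2)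
        (MvPolynomial.X 0 + (MvPolynomial.X 0) ^ 2
          + MvPolynomial.C t * (MvPolynomial.X 1) ^ 2 : MvPolynomial (Fin 2) k) = 1 := by
      rw [MvPolynomial.coeff_add, MvPolynomial.coeff_add, MvPolynomial.coeff_C_mul,
        MvPolynomial.X_pow_eq_monomial, MvPolynomial.X_pow_eq_monomial,
        MvPolynomial.coeff_monomial, MvPolynomial.coeff_monomial, MvPolynomial.coeff_X']
      rw [if_neg, if_pos rfl, if_neg]
      · ring
      · intro h
        have := DFunLike.congr_fun h 1
        simp at this
      · intro h
        have := DFunLike.congr_fun h 0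
        simp at this
    have hs : (Finsupp.single (0 : Fin 2) 2) ∈ (MvPolynomial.X 0 + (MvPolynomial.X 0) ^ 2
          + MvPolynomial.C t * (MvPolynomial.X 1) ^ 2 : MvPolynomial (Fin 2) k).support := by
      rw [MvPolynomial.mem_support_iff, hc]
      exact one_ne_zero
    have := MvPolynomial.le_totalDegree hs
    simpa using this

end Degree


end GabberAux

section GabberAux2

open Polynomial

-- ===== localization evaluation helpers =====

section Helpers

variable {K : Type} [Field K]

lemma awayEval_algebraMap (f : Polynomial K) (c : K) (hc : f.eval c ≠ 0) (p : Polynomial K) :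
    awayEval K f c hc (algebraMap (Polynomial K) (Localization.Away f) p) = p.eval c :=
  IsLocalization.Away.lift_eq f (by simpa using isUnit_iff_ne_zero.mpr hc) p

lemma awayEval_awayConst (f : Polynomial K) (c : K) (hc : f.eval c ≠ 0) (x : K) :
    awayEval K f c hc (awayConst K f x) = x := by
  rw [awayConst, RingHom.comp_apply, awayEval_algebraMap, Polynomial.eval_C]

lemma awayEval_invSelf (f : Polynomial K) (c : K) (hc : f.eval c ≠ 0) :
    awayEval K f c hc (IsLocalization.Away.invSelf f) = (f.eval c)⁻¹ := by
  have h := congrArg (awayEval K f c hc) (IsLocalization.Away.mul_invSelf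
    (S := Localization.Away f) f)
  rw [map_mul, map_one, awayEval_algebraMap] at h
  exact eq_inv_of_mul_eq_one_left (by rw [mul_comm]; exact h)

end Helpers


lemma two_zero_K' (k₀ : Type) [Field k₀] [CharP k₀ 2] (K : Type) [Field K]
    [Algebra (RatFunc k₀) K] : (2 : K) = 0 := by
  have h2 : (2 : k₀) = 0 := by exact_mod_cast CharP.cast_eq_zero k₀ 2
  have e1 : (2 : RatFunc k₀) = algebraMap k₀ (RatFunc k₀) 2 := (map_ofNat _ 2).symm
  have e0 : (2 : RatFunc k₀) = 0 := by rw [e1, h2, map_zero]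
  have e2 : (2 : K) = algebraMap (RatFunc k₀) K 2 := (map_ofNat _ 2).symm
  rw [e2, e0, map_zero]

lemma two_zero_poly' {K : Type} [Field K] (h2 : (2 : K) = 0) : (2 : Polynomial K) = 0 := by
  have : (2 : Polynomial K) = Polynomial.C (2 : K) := (map_ofNat Polynomial.C 2).symm
  rw [this, h2, map_zero]

section Triviality

variable (k₀ : Type) [Field k₀] (K : Type) [Field K] [Algebra (RatFunc k₀) K]

lemma tau_ne_zero : algebraMap (RatFunc k₀) K RatFunc.X ≠ 0 := fun h =>
  RatFunc.X_ne_zero ((algebraMap (RatFunc k₀) K).injective (by rw [h, map_zero]))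

lemma tau_add_one_ne_zero (h2 : (2 : K) = 0) :
    algebraMap (RatFunc k₀) K RatFunc.X + 1 ≠ 0 := by
  intro h
  have hX1 : algebraMap (RatFunc k₀) K RatFunc.X = algebraMap (RatFunc k₀) K 1 := by
    rw [map_one]
    linear_combination h - h2
  have : (RatFunc.X : RatFunc k₀) = 1 := (algebraMap (RatFunc k₀) K).injective hX1
  have hd := congrArg RatFunc.intDegree this
  rw [RatFunc.intDegree_X, RatFunc.intDegree_one] at hd
  omega

/-- master link lemma for the conic -/
lemma rlink_conic_of_poly (p q f : Polynomial K) (h0 : f.eval 0 ≠ 0) (h1 : f.eval 1 ≠ 0)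
    (hpoly : p * f = -(p ^ 2)
      - Polynomial.C (algebraMap (RatFunc k₀) K RatFunc.X) * q ^ 2) :
    RLinkedConic k₀ K (p.eval 0 / f.eval 0, q.eval 0 / f.eval 0)
      (p.eval 1 / f.eval 1, q.eval 1 / f.eval 1) := by
  set F := algebraMap (Polynomial K) (Localization.Away f) with hF
  set iv := IsLocalization.Away.invSelf (S := Localization.Away f) f with hiv
  have hu : F f * iv = 1 := IsLocalization.Away.mul_invSelf f
  refine ⟨f, h0, h1, (F p * iv, F q * iv), ?_, ?_, ?_⟩
  · unfold conicSol
    simp only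
    have hmap := congrArg F hpoly
    rw [map_mul, map_sub, map_neg, map_pow, map_mul, map_pow] at hmap
    have hconst : awayConst K f (algebraMap (RatFunc k₀) K RatFunc.X)
        = F (Polynomial.C (algebraMap (RatFunc k₀) K RatFunc.X)) := rfl
    rw [hconst]
    linear_combination iv ^ 2 * hmap - (F p * iv) * hu
  · have e1 := awayEval_algebraMap f 0 h0 p
    have e2 := awayEval_algebraMap f 0 h0 q
    have e3 := awayEval_invSelf f 0 h0
    simp only [hF, hiv, map_mul, e1, e2, e3, div_eq_mul_inv]
  · have e1 := awayEval_algebraMap f 1 h1 p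
    have e2 := awayEval_algebraMap f 1 h1 q
    have e3 := awayEval_invSelf f 1 h1
    simp only [hF, hiv, map_mul, e1, e2, e3, div_eq_mul_inv]

lemma conic_base (h2 : (2 : K) = 0) :
    conicSol (algebraMap (RatFunc k₀) K RatFunc.X) ((1 : K), (0 : K)) := by
  unfold conicSol
  simp only
  linear_combination h2

lemma rlink_conic_of_poly' (p q f : Polynomial K) (h0 : f.eval 0 ≠ 0) (h1 : f.eval 1 ≠ 0)
    (hpoly : p * f = -(p ^ 2)
      - Polynomial.C (algebraMap (RatFunc k₀) K RatFunc.X) * q ^ 2)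
    (P Q : K × K)
    (hP1 : p.eval 0 / f.eval 0 = P.1) (hP2 : q.eval 0 / f.eval 0 = P.2)
    (hQ1 : p.eval 1 / f.eval 1 = Q.1) (hQ2 : q.eval 1 / f.eval 1 = Q.2) :
    RLinkedConic k₀ K P Q := by
  have l := rlink_conic_of_poly k₀ K p q f h0 h1 hpoly
  rw [hP1, hP2, hQ1, hQ2] at l
  exact l

/-- link from the base point to any conic point with nonzero first coordinate -/
lemma base_to_nonzero (h2 : (2 : K) = 0) (P : K × K)
    (hP : conicSol (algebraMap (RatFunc k₀) K RatFunc.X) P) (hP1 : P.1 ≠ 0) :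
    RLinkedConic k₀ K (1, 0) P := by
  set τ := algebraMap (RatFunc k₀) K RatFunc.X with hτ
  have h2P := two_zero_poly' h2
  unfold conicSol at hP
  set u := P.2 / P.1 with hu
  have hA : (τ * u ^ 2 + 1) * P.1 = 1 := by
    rw [hu]
    field_simp
    linear_combination hP - P.1 * h2
  have hAne : τ * u ^ 2 + 1 ≠ 0 := by
    intro h
    rw [h, zero_mul] at hA
    exact zero_ne_one hA
  have hAinv : τ * u ^ 2 + 1 = P.1⁻¹ := eq_inv_of_mul_eq_one_left hA
  refine rlink_conic_of_poly' k₀ K 1 (Polynomial.C u * Polynomial.X)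
    (Polynomial.C τ * (Polynomial.C u * Polynomial.X) ^ 2 + 1) (by simp) ?_ ?_ _ _ ?_ ?_ ?_ ?_
  · simp only [Polynomial.eval_add, Polynomial.eval_mul, Polynomial.eval_pow,
      Polynomial.eval_C, Polynomial.eval_X, Polynomial.eval_one, mul_one]
    exact hAne
  · linear_combination (1 + Polynomial.C τ * (Polynomial.C u * Polynomial.X) ^ 2) * h2P
  · simp
  · simp
  · simp only [Polynomial.eval_add, Polynomial.eval_mul, Polynomial.eval_pow,
      Polynomial.eval_C, Polynomial.eval_X, Polynomial.eval_one, mul_one]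
    rw [div_eq_iff hAne]
    linear_combination hA + (1 - P.1 - P.1 * τ * P.2 ^ 2 * P.1⁻¹ ^ 2) * h2
  · simp only [Polynomial.eval_add, Polynomial.eval_mul, Polynomial.eval_pow,
      Polynomial.eval_C, Polynomial.eval_X, Polynomial.eval_one, mul_one]
    rw [hAinv, hu, div_eq_mul_inv, div_eq_mul_inv, inv_inv]
    field_simp

/-- every conic point is R-equivalent to the base point (1,0) -/
lemma conic_to_base (h2 : (2 : K) = 0) (P : K × K)
    (hP : conicSol (algebraMap (RatFunc k₀) K RatFunc.X) P) :
    Relation.EqvGen (RLinkedConic k₀ K) P (1, 0) := by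
  set τ := algebraMap (RatFunc k₀) K RatFunc.X with hτ
  have h2P := two_zero_poly' h2
  have hτ0 : τ ≠ 0 := tau_ne_zero k₀ K
  by_cases hP1 : P.1 = 0
  · have hP2 : P.2 = 0 := by
      unfold conicSol at hP
      rw [hP1] at hP
      have h00 : τ * P.2 ^ 2 = 0 := by linear_combination hP
      rcases mul_eq_zero.mp h00 with h | h
      · exact absurd h hτ0
      · exact pow_eq_zero_iff (two_ne_zero) |>.mp h
    have hP0 : P = ((0 : K), (0 : K)) := Prod.ext hP1 hP2
    have h1τ : (1 : K) + τ ≠ 0 := by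
      rw [add_comm]; exact tau_add_one_ne_zero k₀ K h2
    have l1 : RLinkedConic k₀ K ((0 : K), (0 : K)) ((1 + τ)⁻¹, (1 + τ)⁻¹) := by
      refine rlink_conic_of_poly' k₀ K (Polynomial.X ^ 2) Polynomial.X
        (Polynomial.X ^ 2 + Polynomial.C τ) ?_ ?_ ?_ _ _ ?_ ?_ ?_ ?_
      · simpa using hτ0
      · simpa using h1τ
      · linear_combination (Polynomial.X ^ 4 + Polynomial.C τ * Polynomial.X ^ 2) * h2P
      · simp
      · simp
      · simp only [Polynomial.eval_add, Polynomial.eval_pow, Polynomial.eval_X,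
          Polynomial.eval_C, one_pow]
        rw [one_div]
      · simp only [Polynomial.eval_add, Polynomial.eval_pow, Polynomial.eval_X,
          Polynomial.eval_C, one_pow]
        rw [one_div]
    have hQm : conicSol τ ((1 + τ)⁻¹, (1 + τ)⁻¹) := by
      unfold conicSol
      simp only
      field_simp
      linear_combination (1 + τ) * h2
    have l2 : RLinkedConic k₀ K (1, 0) ((1 + τ)⁻¹, (1 + τ)⁻¹) :=
      base_to_nonzero k₀ K h2 _ hQm (inv_ne_zero h1τ)
    rw [hP0]
    exact Relation.EqvGen.trans _ _ _ (Relation.EqvGen.rel _ _ l1)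
      (Relation.EqvGen.symm _ _ (Relation.EqvGen.rel _ _ l2))
  · exact Relation.EqvGen.symm _ _
      (Relation.EqvGen.rel _ _ (base_to_nonzero k₀ K h2 P hP hP1))

theorem conic_trivial (h2 : (2 : K) = 0) (P Q : K × K)
    (hP : conicSol (algebraMap (RatFunc k₀) K RatFunc.X) P)
    (hQ : conicSol (algebraMap (RatFunc k₀) K RatFunc.X) Q) :
    REquivConic k₀ K P Q :=
  Relation.EqvGen.trans _ _ _ (conic_to_base k₀ K h2 P hP)
    (Relation.EqvGen.symm _ _ (conic_to_base k₀ K h2 Q hQ))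

end Triviality


section Glue

variable {K : Type} [Field K]

lemma conic_add (h2 : (2 : K) = 0) {τ : K} {a b : K × K}
    (ha : conicSol τ a) (hb : conicSol τ b) : conicSol τ (a + b) := by
  unfold conicSol at *
  simp only [Prod.fst_add, Prod.snd_add]
  linear_combination ha + hb + (a.1 * b.1 + τ * a.2 * b.2) * h2

lemma quartic_add (h2 : (2 : K) = 0) {τ : K} {a b : K × K}
    (ha : quarticSol τ a) (hb : quarticSol τ b) : quarticSol τ (a + b) := by
  unfold quarticSol at *
  simp only [Prod.fst_add, Prod.snd_add]
  linear_combination ha + hb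
    + (-(2 * a.1 ^ 3 * b.1 + 3 * a.1 ^ 2 * b.1 ^ 2 + 2 * a.1 * b.1 ^ 3)
      - τ * (2 * a.2 ^ 3 * b.2 + 3 * a.2 ^ 2 * b.2 ^ 2 + 2 * a.2 * b.2 ^ 3)) * h2

lemma awayConst_conic {f : Polynomial K} {τ : K} {P : K × K} (hP : conicSol τ P) :
    conicSol (awayConst K f τ) (awayConst K f P.1, awayConst K f P.2) := by
  unfold conicSol at *
  simp only
  have := congrArg (awayConst K f) hP
  rwa [map_sub, map_neg, map_pow, map_mul, map_pow] at this

lemma awayConst_quartic {f : Polynomial K} {τ : K} {Q : K × K} (hQ : quarticSol τ Q) :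
    quarticSol (awayConst K f τ) (awayConst K f Q.1, awayConst K f Q.2) := by
  unfold quarticSol at *
  simp only
  have := congrArg (awayConst K f) hQ
  rwa [map_add, map_mul, map_pow, map_pow] at this

end Glue

section Glue2

variable (k₀ : Type) [Field k₀] (K : Type) [Field K] [Algebra (RatFunc k₀) K]

lemma pair_left {Q : K × K}
    (hQ : quarticSol (algebraMap (RatFunc k₀) K RatFunc.X) Q) {P P' : K × K}
    (h : RLinkedConic k₀ K P P') : RLinkedG k₀ K (P, Q) (P', Q) := by
  obtain ⟨f, h0, h1, v, hsol, he0, he1⟩ := h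
  refine ⟨f, h0, h1, (v, (awayConst K f Q.1, awayConst K f Q.2)),
    ⟨hsol, awayConst_quartic hQ⟩, ?_, ?_⟩
  · rw [awayEval_awayConst, awayEval_awayConst]
    exact Prod.ext he0 rfl
  · rw [awayEval_awayConst, awayEval_awayConst]
    exact Prod.ext he1 rfl

lemma pair_right {P : K × K}
    (hP : conicSol (algebraMap (RatFunc k₀) K RatFunc.X) P) {Q Q' : K × K}
    (h : RLinkedQuartic k₀ K Q Q') : RLinkedG k₀ K (P, Q) (P, Q') := by
  obtain ⟨f, h0, h1, v, hsol, he0, he1⟩ := h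
  refine ⟨f, h0, h1, ((awayConst K f P.1, awayConst K f P.2), v),
    ⟨awayConst_conic hP, hsol⟩, ?_, ?_⟩
  · rw [awayEval_awayConst, awayEval_awayConst]
    exact Prod.ext rfl he0
  · rw [awayEval_awayConst, awayEval_awayConst]
    exact Prod.ext rfl he1

lemma proj_conic {w w' : (K × K) × (K × K)} (h : RLinkedG k₀ K w w') :
    RLinkedConic k₀ K w.1 w'.1 := by
  obtain ⟨f, h0, h1, v, hsol, he0, he1⟩ := h
  exact ⟨f, h0, h1, v.1, hsol.1, congrArg Prod.fst he0, congrArg Prod.fst he1⟩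

lemma proj_quartic {w w' : (K × K) × (K × K)} (h : RLinkedG k₀ K w w') :
    RLinkedQuartic k₀ K w.2 w'.2 := by
  obtain ⟨f, h0, h1, v, hsol, he0, he1⟩ := h
  exact ⟨f, h0, h1, v.2, hsol.2, congrArg Prod.snd he0, congrArg Prod.snd he1⟩

lemma eqv_proj_conic {w w' : (K × K) × (K × K)} (h : REquivG k₀ K w w') :
    REquivConic k₀ K w.1 w'.1 := by
  induction h with
  | rel x y hxy => exact Relation.EqvGen.rel _ _ (proj_conic k₀ K hxy)
  | refl x => exact Relation.EqvGen.refl _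
  | symm x y _ ih => exact Relation.EqvGen.symm _ _ ih
  | trans x y z _ _ ih1 ih2 => exact Relation.EqvGen.trans _ _ _ ih1 ih2

lemma eqv_proj_quartic {w w' : (K × K) × (K × K)} (h : REquivG k₀ K w w') :
    REquivQuartic k₀ K w.2 w'.2 := by
  induction h with
  | rel x y hxy => exact Relation.EqvGen.rel _ _ (proj_quartic k₀ K hxy)
  | refl x => exact Relation.EqvGen.refl _
  | symm x y _ ih => exact Relation.EqvGen.symm _ _ ih
  | trans x y z _ _ ih1 ih2 => exact Relation.EqvGen.trans _ _ _ ih1 ih2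

lemma eqv_pair_left {Q : K × K}
    (hQ : quarticSol (algebraMap (RatFunc k₀) K RatFunc.X) Q) {P P' : K × K}
    (h : REquivConic k₀ K P P') : REquivG k₀ K (P, Q) (P', Q) := by
  induction h with
  | rel x y hxy => exact Relation.EqvGen.rel _ _ (pair_left k₀ K hQ hxy)
  | refl x => exact Relation.EqvGen.refl _
  | symm x y _ ih => exact Relation.EqvGen.symm _ _ ih
  | trans x y z _ _ ih1 ih2 => exact Relation.EqvGen.trans _ _ _ ih1 ih2

lemma eqv_pair_right {P : K × K}
    (hP : conicSol (algebraMap (RatFunc k₀) K RatFunc.X) P) {Q Q' : K × K}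
    (h : REquivQuartic k₀ K Q Q') : REquivG k₀ K (P, Q) (P, Q') := by
  induction h with
  | rel x y hxy => exact Relation.EqvGen.rel _ _ (pair_right k₀ K hP hxy)
  | refl x => exact Relation.EqvGen.refl _
  | symm x y _ ih => exact Relation.EqvGen.symm _ _ ih
  | trans x y z _ _ ih1 ih2 => exact Relation.EqvGen.trans _ _ _ ih1 ih2

/-- product decomposition of R-equivalence on G -/
lemma requivG_iff (h2 : (2 : K) = 0) {w w' : (K × K) × (K × K)}
    (hw : gSol (algebraMap (RatFunc k₀) K RatFunc.X) w)
    (hw' : gSol (algebraMap (RatFunc k₀) K RatFunc.X) w') :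
    REquivG k₀ K w w' ↔
      (REquivConic k₀ K w.1 w'.1 ∧ REquivQuartic k₀ K w.2 w'.2) := by
  constructor
  · intro h
    exact ⟨eqv_proj_conic k₀ K h, eqv_proj_quartic k₀ K h⟩
  · rintro ⟨hc, hq⟩
    have step1 : REquivG k₀ K (w.1, w.2) (w'.1, w.2) := eqv_pair_left k₀ K hw.2 hc
    have step2 : REquivG k₀ K (w'.1, w.2) (w'.1, w'.2) := eqv_pair_right k₀ K hw'.1 hq
    have := Relation.EqvGen.trans _ _ _ step1 step2
    exact this

end Glue2

end GabberAux2


/-- **Remark 4 of the paper (Gabber's groups in characteristic 2).**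
Let `k₀` be a field of characteristic `2` and `k = k₀(t)`.  Let
`G₁ = {X = -X² - tY²} ⊆ 𝔸²_k` and `G₂ = {X = X⁴ + tY⁴} ⊆ 𝔸²_k`.  Then `G₁` is a conic
in `𝔸²_k` with a `k`-rational point, hence birational to `ℙ¹_k` (its function field is
`k`-isomorphic to `k(T)`), and `G₁(K)/R` is trivial for every field extension `K/k`.
Consequently, for every central extension `G` of `G₂` by `G₁` constructed from a
bi-additive morphism `h : G₂ × G₂ → G₁` (so `G = G₁ × G₂` as a `k`-variety, with
multiplication twisted by `h`), one has `G(K)/R = G₁(K)/R × G₂(K)/R = G₂(K)/R` for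
every field extension `K/k`; in particular `G(K)/R` is commutative for every `K/k`. -/
theorem gabber_char_two_extension_has_commutative_R_equivalence_groups
    (k₀ : Type) [Field k₀] [CharP k₀ 2] :
    -- `G₁` is a conic: its equation has total degree `2` ...
    ((MvPolynomial.X 0 - (-(MvPolynomial.X 0) ^ 2 - MvPolynomial.C RatFunc.X * (MvPolynomial.X 1) ^ 2) :
        MvPolynomial (Fin 2) (RatFunc k₀)).totalDegree = 2) ∧
    -- ... with a `k`-rational point ...
    (∃ P : RatFunc k₀ × RatFunc k₀, conicSol (RatFunc.X : RatFunc k₀) P) ∧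
    -- ... hence `G₁` is birational to `ℙ¹_k`: its function field is `k(T)`
    Nonempty
      ((FractionRing (MvPolynomial (Fin 2) (RatFunc k₀) ⧸
          Ideal.span {(MvPolynomial.X 0 - (-(MvPolynomial.X 0) ^ 2 - MvPolynomial.C RatFunc.X * (MvPolynomial.X 1) ^ 2) :
            MvPolynomial (Fin 2) (RatFunc k₀))})) ≃ₐ[RatFunc k₀] RatFunc (RatFunc k₀)) ∧
    -- `G₁(K)/R` is trivial for every field extension `K/k`
    (∀ (K : Type) [Field K] [Algebra (RatFunc k₀) K],
      ∀ P Q : K × K, conicSol (algebraMap (RatFunc k₀) K RatFunc.X) P →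
        conicSol (algebraMap (RatFunc k₀) K RatFunc.X) Q → REquivConic k₀ K P Q) ∧
    -- consequences for every central extension `G` of `G₂` by `G₁` built from a
    -- bi-additive morphism `h : G₂ × G₂ → G₁`
    (∀ h : ∀ (K : Type) [Field K] [Algebra (RatFunc k₀) K], (K × K) → (K × K) → (K × K),
      -- `h` is a morphism of `k`-varieties: it is given by a pair of polynomials
      (∃ H : MvPolynomial (Fin 4) (RatFunc k₀) × MvPolynomial (Fin 4) (RatFunc k₀),
        ∀ (K : Type) [Field K] [Algebra (RatFunc k₀) K] (w w' : K × K),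
          h K w w' = (MvPolynomial.aeval ![w.1, w.2, w'.1, w'.2] H.1,
            MvPolynomial.aeval ![w.1, w.2, w'.1, w'.2] H.2)) →
      -- `h` maps `G₂ × G₂` into `G₁`
      (∀ (K : Type) [Field K] [Algebra (RatFunc k₀) K] (w w' : K × K),
        quarticSol (algebraMap (RatFunc k₀) K RatFunc.X) w →
        quarticSol (algebraMap (RatFunc k₀) K RatFunc.X) w' →
        conicSol (algebraMap (RatFunc k₀) K RatFunc.X) (h K w w')) →
      -- `h` is bi-additive on points of `G₂`
      (∀ (K : Type) [Field K] [Algebra (RatFunc k₀) K] (w w' w'' : K × K),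
        quarticSol (algebraMap (RatFunc k₀) K RatFunc.X) w →
        quarticSol (algebraMap (RatFunc k₀) K RatFunc.X) w' →
        quarticSol (algebraMap (RatFunc k₀) K RatFunc.X) w'' →
        h K (w + w') w'' = h K w w'' + h K w' w'' ∧
        h K w (w' + w'') = h K w w' + h K w w'') →
      ∀ (K : Type) [Field K] [Algebra (RatFunc k₀) K],
        ∀ w w' : (K × K) × (K × K),
          gSol (algebraMap (RatFunc k₀) K RatFunc.X) w →
          gSol (algebraMap (RatFunc k₀) K RatFunc.X) w' →
          -- `G(K)/R = G₁(K)/R × G₂(K)/R`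
          (REquivG k₀ K w w' ↔
            (REquivConic k₀ K w.1 w'.1 ∧ REquivQuartic k₀ K w.2 w'.2)) ∧
          -- `G(K)/R = G₂(K)/R`
          (REquivG k₀ K w w' ↔ REquivQuartic k₀ K w.2 w'.2) ∧
          -- `G(K)/R` is commutative
          REquivG k₀ K (gMul (h K) w w') (gMul (h K) w' w)) := by
  have h2k : (2 : RatFunc k₀) = 0 := two_zero_K' k₀ (RatFunc k₀)
  have htX : (RatFunc.X : RatFunc k₀) ≠ 0 := RatFunc.X_ne_zero
  refine ⟨Fmv_totalDegree RatFunc.X, ⟨(0, 0), by unfold conicSol; simp⟩, ?_, ?_, ?_⟩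
  · exact conic_function_field RatFunc.X (dpoly_prime h2k htX (X_notSq k₀)) htX h2k
  · intro K _ _ P Q hP hQ
    exact conic_trivial k₀ K (two_zero_K' k₀ K) P Q hP hQ
  · intro h _ hmap _ K _ _ w w' hw hw'
    have h2 := two_zero_K' k₀ K
    have hiff := requivG_iff k₀ K h2 hw hw'
    refine ⟨hiff, ?_, ?_⟩
    · constructor
      · intro hg
        exact eqv_proj_quartic k₀ K hg
      · intro hq
        exact hiff.mpr ⟨conic_trivial k₀ K h2 _ _ hw.1 hw'.1, hq⟩
    · have hm1 : gSol (algebraMap (RatFunc k₀) K RatFunc.X) (gMul (h K) w w') :=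
        ⟨conic_add h2 (conic_add h2 hw.1 hw'.1) (hmap K w.2 w'.2 hw.2 hw'.2),
          quartic_add h2 hw.2 hw'.2⟩
      have hm2 : gSol (algebraMap (RatFunc k₀) K RatFunc.X) (gMul (h K) w' w) :=
        ⟨conic_add h2 (conic_add h2 hw'.1 hw.1) (hmap K w'.2 w.2 hw'.2 hw.2),
          quartic_add h2 hw'.2 hw.2⟩
      apply (requivG_iff k₀ K h2 hm1 hm2).mpr
      constructor
      · exact conic_trivial k₀ K h2 _ _ hm1.1 hm2.1
      · have hsec : (gMul (h K) w w').2 = (gMul (h K) w' w).2 := by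
          simp [gMul, add_comm]
        rw [hsec]
        exact Relation.EqvGen.refl _


end
end
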